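/- arXiv:2501.12472 — 2 statements merged into one kernel-verified Lean document; each statement's English description precedes it below -/
import Mathlib

section
/- Let 0 < ε < 1. Let v₁, …, v_k ∈ ℝⁿ satisfy ‖v_i‖ = 1 for each i, and let w₁, …, w_k ∈ ℝⁿ satisfy ‖w_i − v_i‖ ≤ 2^(−k)·ε for each i. If A is the matrix with columns v₁, …, v_k and B is the matrix with columns w₁, …, w_k, then ‖M(B) − M(A)‖ ≤ ε, where the norm is the Euclidean norm on EuclideanSpace ℝ (Λ(n,k)). -/
open scoped BigOperators Matrix

/-- `Lam n k` : the `k`-element subsets of `Fin n` (the index set `Λ(n,k)`). -/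
abbrev Lam (n k : ℕ) : Type := {s : Finset (Fin n) // s.card = k}

/-- The Plücker (minor) vector of a matrix `A : Matrix (Fin n) (Fin k) ℝ`:
`M(A)(λ)` is the determinant of the `k × k` submatrix of `A` formed by the rows
indexed by `λ`. -/
noncomputable def pluecker (n k : ℕ) (A : Matrix (Fin n) (Fin k) ℝ) :
    EuclideanSpace ℝ (Lam n k) :=
  WithLp.toLp 2 (fun lam : Lam n k => (A.submatrix (lam.1.orderEmbOfFin lam.2) id).det)

/-- The Plücker model of the oriented Grassmannian `G(n,k)`. -/
def Grass (n k : ℕ) : Set (EuclideanSpace ℝ (Lam n k)) :=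
  {x | ∃ A : Matrix (Fin n) (Fin k) ℝ, Aᵀ * A = 1 ∧ pluecker n k A = x}

section Aux
open Matrix Finset


lemma orderEmbOfFin_congr {n k : ℕ} {s t : Finset (Fin n)} (h : s = t)
    (hs : s.card = k) (ht : t.card = k) (i : Fin k) :
    s.orderEmbOfFin hs i = t.orderEmbOfFin ht i := by subst h; rfl

section CB
variable {n k : ℕ}

lemma card_image_univ (f : Fin k → Fin n) (hf : Function.Injective f) :
    (Finset.image f Finset.univ).card = k := by
  rw [Finset.card_image_of_injective _ hf, Finset.card_univ, Fintype.card_fin]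

noncomputable def permOf (f : Fin k → Fin n) (hf : Function.Injective f) :
    Equiv.Perm (Fin k) :=
  Equiv.ofBijective
    (fun i => ((Finset.image f Finset.univ).orderIsoOfFin (card_image_univ f hf)).symm
      ⟨f i, Finset.mem_image_of_mem f (Finset.mem_univ i)⟩)
    (Finite.injective_iff_bijective.mp (fun a b hab => by
      apply hf
      have := congrArg (fun x => (((Finset.image f Finset.univ).orderIsoOfFin
        (card_image_univ f hf)) x : Fin n)) hab
      simpa using this))

lemma permOf_key (f : Fin k → Fin n) (hf : Function.Injective f) (i : Fin k) :
    (Finset.image f Finset.univ).orderEmbOfFin (card_image_univ f hf) (permOf f hf i) = f i := by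
  rw [← Finset.coe_orderIsoOfFin_apply]
  simp [permOf, Equiv.ofBijective_apply]

lemma image_orderEmb (lam : Lam n k) (σ : Equiv.Perm (Fin k)) :
    Finset.image (fun i => lam.1.orderEmbOfFin lam.2 (σ i)) Finset.univ = lam.1 := by
  apply Finset.coe_injective
  rw [Finset.coe_image, Finset.coe_univ, Set.image_univ]
  have h : (fun i => lam.1.orderEmbOfFin lam.2 (σ i))
      = (lam.1.orderEmbOfFin lam.2) ∘ σ := rfl
  rw [h, (Equiv.surjective σ).range_comp, Finset.range_orderEmbOfFin]

theorem cauchy_binet (A B : Matrix (Fin n) (Fin k) ℝ) :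
    (Aᵀ * B).det = ∑ lam : Lam n k,
      (A.submatrix (lam.1.orderEmbOfFin lam.2) id).det *
      (B.submatrix (lam.1.orderEmbOfFin lam.2) id).det := by
  classical
  have h1 : (Aᵀ * B).det
      = ∑ f : Fin k → Fin n, (∏ i, A (f i) i) * (B.submatrix f id).det := by
    have h : (Aᵀ * B) = Matrix.of (fun i => ∑ r : Fin n, A r i • B r) := by
      ext i j; simp [Matrix.mul_apply, Finset.sum_apply]
    rw [h]
    show (detRowAlternating (R := ℝ)).toMultilinearMap (fun i => ∑ r : Fin n, A r i • B r) = _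
    rw [MultilinearMap.map_sum]
    refine Finset.sum_congr rfl fun f _ => ?_
    rw [MultilinearMap.map_smul_univ]
    rfl
  rw [h1]
  rw [← Finset.sum_filter_of_ne (p := fun f => Function.Injective f)
    (by
      intro f _ hne
      by_contra hni
      apply hne
      simp only [Function.Injective] at hni
      push_neg at hni
      obtain ⟨a, b, hab, hne'⟩ := hni
      have : (B.submatrix f id).det = 0 := by
        apply Matrix.det_zero_of_row_eq hne'
        ext j; simp [hab]
      simp [this])]
  have h2 : ∑ f ∈ Finset.univ.filter (fun f : Fin k → Fin n => Function.Injective f),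
        (∏ i, A (f i) i) * (B.submatrix f id).det
      = ∑ p : Lam n k × Equiv.Perm (Fin k),
        (((Equiv.Perm.sign p.2 : ℤ) : ℝ) * ∏ i, A (p.1.1.orderEmbOfFin p.1.2 (p.2 i)) i) *
        (B.submatrix (p.1.1.orderEmbOfFin p.1.2) id).det := by
    refine Finset.sum_bij'
      (i := fun f hf => (⟨⟨Finset.image f Finset.univ,
        card_image_univ f (by simpa using hf)⟩, permOf f (by simpa using hf)⟩ :
        Lam n k × Equiv.Perm (Fin k)))
      (j := fun p _ => fun i => p.1.1.orderEmbOfFin p.1.2 (p.2 i))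
      (fun _ _ => Finset.mem_univ _)
      (fun p _ => by
        simp only [Finset.mem_filter, Finset.mem_univ, true_and]
        exact fun a b hab => (Equiv.injective p.2)
          ((p.1.1.orderEmbOfFin p.1.2).injective hab))
      (fun f hf => by
        funext i
        exact permOf_key f (by simpa using hf) i)
      (fun p _ => by
        have hinj : Function.Injective (fun i => p.1.1.orderEmbOfFin p.1.2 (p.2 i)) :=
          fun a b hab => (Equiv.injective p.2) ((p.1.1.orderEmbOfFin p.1.2).injective hab)
        have him := image_orderEmb p.1 p.2
        refine Prod.ext (Subtype.ext him) (Equiv.ext fun i => ?_)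
        apply (p.1.1.orderEmbOfFin p.1.2).injective
        show p.1.1.orderEmbOfFin p.1.2
          (permOf (fun i => p.1.1.orderEmbOfFin p.1.2 (p.2 i)) hinj i) = _
        rw [← orderEmbOfFin_congr him (card_image_univ _ hinj) p.1.2]
        exact permOf_key _ hinj i)
      (fun f hf => by
        have hf' : Function.Injective f := by simpa using hf
        have key : ∀ i, (Finset.image f Finset.univ).orderEmbOfFin
            (card_image_univ f hf') (permOf f hf' i) = f i := permOf_key f hf'
        have hsub : B.submatrix f id
            = (B.submatrix ((Finset.image f Finset.univ).orderEmbOfFin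
                (card_image_univ f hf')) id).submatrix (permOf f hf') id := by
          ext i j
          simp [key]
        rw [hsub, Matrix.det_permute]
        show _ = (_ * ∏ i, A ((Finset.image f Finset.univ).orderEmbOfFin
            (card_image_univ f hf') (permOf f hf' i)) i) * _
        simp only [key]
        ring)
  rw [h2, Fintype.sum_prod_type]
  refine Finset.sum_congr rfl fun lam _ => ?_
  simp only
  rw [Matrix.det_apply', Finset.sum_mul]
  refine Finset.sum_congr rfl fun σ _ => ?_
  simp [Matrix.submatrix_apply]
end CB
section Had2
variable {n k : ℕ}

variable {n k : ℕ}

lemma pluecker_mul (U : Matrix (Fin n) (Fin k) ℝ) (C : Matrix (Fin k) (Fin k) ℝ) (lam : Lam n k) :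
    pluecker n k (U * C) lam = pluecker n k U lam * C.det := by
  unfold pluecker
  have h : (U * C).submatrix (lam.1.orderEmbOfFin lam.2) id
      = (U.submatrix (lam.1.orderEmbOfFin lam.2) id) * C := by
    ext i j; simp [Matrix.mul_apply]
  simp only [WithLp.ofLp_toLp]
  rw [h, Matrix.det_mul]

theorem pluecker_norm_le (c : Fin k → EuclideanSpace ℝ (Fin n))
    (M : Matrix (Fin n) (Fin k) ℝ) (hM : ∀ i j, M i j = c j i) :
    ‖pluecker n k M‖ ≤ ∏ j, ‖c j‖ := by
  classical
  haveI : WellFoundedLT (Fin k) := inferInstance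
  set u : Fin k → EuclideanSpace ℝ (Fin n) := InnerProductSpace.gramSchmidt ℝ c with hu
  set U : Matrix (Fin n) (Fin k) ℝ := Matrix.of (fun i j => u j i) with hU
  set R : Matrix (Fin k) (Fin k) ℝ := Matrix.of (fun t j =>
    if t = j then 1 else if t < j then (inner ℝ (u t) (c j) : ℝ) / ((‖u t‖ : ℝ) ^ 2) else 0) with hR
  have hfac : M = U * R := by
    ext i j
    have hcj := InnerProductSpace.gramSchmidt_def' ℝ c j
    simp only [Submodule.starProjection_singleton, RCLike.ofReal_real_eq_id, id_eq] at hcj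
    rw [← hu] at hcj
    have hci : c j i = u j i + (∑ t ∈ Finset.Iio j,
        (((inner ℝ (u t) (c j) : ℝ) / ((‖u t‖ : ℝ) ^ 2)) • u t : EuclideanSpace ℝ (Fin n))) i := by
      conv_lhs => rw [hcj]
      rfl
    have hsum : (∑ t ∈ Finset.Iio j,
        (((inner ℝ (u t) (c j) : ℝ) / ((‖u t‖ : ℝ) ^ 2)) • u t : EuclideanSpace ℝ (Fin n))) i
        = ∑ t ∈ Finset.Iio j, ((inner ℝ (u t) (c j) : ℝ) / ((‖u t‖ : ℝ) ^ 2)) * u t i :=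
      by simp only [WithLp.ofLp_sum, Finset.sum_apply, WithLp.ofLp_smul, Pi.smul_apply, smul_eq_mul]
    rw [hsum] at hci
    rw [Matrix.mul_apply, hM, hci]
    have hsupp : ∀ t ∈ Finset.univ, t ∉ insert j (Finset.Iio j) → U i t * R t j = 0 := by
      intro t _ ht
      simp only [Finset.mem_insert, Finset.mem_Iio] at ht
      push_neg at ht
      simp [hR, ht.1, ht.2]
    rw [← Finset.sum_subset (Finset.subset_univ _) hsupp,
      Finset.sum_insert (by simp)]
    rw [show U i j * R j j = u j i by simp [hU, hR]]
    congr 1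
    refine Finset.sum_congr rfl fun t ht => ?_
    have ht' : t < j := Finset.mem_Iio.mp ht
    simp [hU, hR, ht'.ne, ht', mul_comm]
  have hdetR : R.det = 1 := by
    rw [Matrix.det_of_upperTriangular (by
      intro i j hij
      have h1 : ¬ i = j := fun h => absurd h (by simpa using hij.ne')
      have h2 : ¬ i < j := not_lt.mpr hij.le
      simp [hR, h1, h2])]
    simp [hR]
  have h0 : pluecker n k M = pluecker n k U := by
    ext lam
    rw [hfac, pluecker_mul, hdetR, mul_one]
  have horth : Uᵀ * U = Matrix.diagonal (fun j => ‖u j‖ ^ 2) := by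
    ext a b
    rw [Matrix.mul_apply]
    by_cases hab : a = b
    · subst hab
      rw [Matrix.diagonal_apply_eq]
      rw [← real_inner_self_eq_norm_sq (u a), PiLp.inner_apply]
      simp [hU, mul_comm, sq]
    · rw [Matrix.diagonal_apply_ne _ hab]
      have horr := InnerProductSpace.gramSchmidt_orthogonal ℝ c (a := a) (b := b) hab
      rw [← hu, PiLp.inner_apply] at horr
      simp only [RCLike.inner_apply, conj_trivial] at horr
      simpa [hU, Matrix.transpose_apply, mul_comm] using horr
  have hnormU : ‖pluecker n k U‖ = ∏ j, ‖u j‖ := by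
    rw [EuclideanSpace.norm_eq]
    have hsq : ∑ lam : Lam n k, ‖pluecker n k U lam‖ ^ 2 = (Uᵀ * U).det := by
      rw [cauchy_binet U U]
      refine Finset.sum_congr rfl fun lam _ => ?_
      rw [Real.norm_eq_abs, sq_abs, sq]
      rfl
    rw [hsq, horth, Matrix.det_diagonal, Finset.prod_pow,
      Real.sqrt_sq (by positivity)]
  rw [h0, hnormU]
  refine Finset.prod_le_prod (fun j _ => norm_nonneg _) (fun j _ => ?_)
  -- ‖u j‖ ≤ ‖c j‖
  have hcj := InnerProductSpace.gramSchmidt_def' ℝ c j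
  rw [← hu] at hcj
  have hor : (inner ℝ (u j) (c j) : ℝ) = ‖u j‖ ^ 2 := by
    conv_lhs => rw [hcj]
    rw [inner_add_right, real_inner_self_eq_norm_sq, inner_sum]
    rw [Finset.sum_eq_zero fun t ht => ?_, add_zero]
    have ht' : t < j := Finset.mem_Iio.mp ht
    rw [Submodule.starProjection_singleton, inner_smul_right]
    have horr := InnerProductSpace.gramSchmidt_orthogonal ℝ c (a := j) (b := t) ht'.ne'
    rw [← hu] at horr
    rw [horr, mul_zero]
  have hperp : (inner ℝ (u j) (c j - u j) : ℝ) = 0 := by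
    rw [inner_sub_right, hor, real_inner_self_eq_norm_sq, sub_self]
  have hnn : ‖c j‖ ^ 2 = ‖u j‖ ^ 2 + ‖c j - u j‖ ^ 2 := by
    have hd : c j = u j + (c j - u j) := by abel
    calc ‖c j‖ ^ 2 = ‖u j + (c j - u j)‖ ^ 2 := by rw [← hd]
    _ = ‖u j‖ ^ 2 + 2 * (inner ℝ (u j) (c j - u j) : ℝ) + ‖c j - u j‖ ^ 2 :=
        norm_add_sq_real _ _
    _ = ‖u j‖ ^ 2 + ‖c j - u j‖ ^ 2 := by rw [hperp]; ring
  nlinarith [norm_nonneg (u j), norm_nonneg (c j), sq_nonneg ‖c j - u j‖]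
end Had2

lemma det_telescope {k : ℕ} (X Y : Matrix (Fin k) (Fin k) ℝ) :
    Y.det - X.det = ∑ m : Fin k, (Matrix.of fun (i j : Fin k) =>
      if (j : ℕ) < (m : ℕ) then Y i j
      else if j = m then Y i j - X i j else X i j).det := by
  classical
  set G : ℕ → Matrix (Fin k) (Fin k) ℝ :=
    fun t => Matrix.of fun (i j : Fin k) => if (j : ℕ) < t then Y i j else X i j with hG
  set E : Fin k → Matrix (Fin k) (Fin k) ℝ :=
    fun m => Matrix.of fun (i j : Fin k) =>
      if (j : ℕ) < (m : ℕ) then Y i j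
      else if j = m then Y i j - X i j else X i j with hE
  have key : ∀ t, t ≤ k → (G t).det - (G 0).det
      = ∑ m ∈ Finset.univ.filter (fun m : Fin k => (m : ℕ) < t), (E m).det := by
    intro t
    induction t with
    | zero => intro _; simp
    | succ t ih =>
      intro ht
      have ht' : t < k := ht
      have ihh := ih (le_of_lt ht')
      set m0 : Fin k := ⟨t, ht'⟩ with hm0
      have hup1 : G (t + 1) = (G t).updateCol m0 (fun i => Y i m0) := by
        ext i j
        rw [Matrix.updateCol_apply]
        by_cases hj : j = m0
        · subst hj; simp [hG, hm0]
        · have : ((j : ℕ) < t + 1) ↔ ((j : ℕ) < t) := by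
            constructor
            · intro h
              rcases Nat.lt_succ_iff_lt_or_eq.mp h with h' | h'
              · exact h'
              · exact absurd (Fin.ext h' : j = m0) hj
            · exact fun h => Nat.lt_succ_of_lt h
          simp [hG, hj, this]
      have hup2 : E m0 = (G t).updateCol m0 (fun i => Y i m0 - X i m0) := by
        ext i j
        by_cases hj : j = m0
        · subst hj; simp [hE, hm0, Matrix.updateCol_apply]
        · simp only [hE, Matrix.of_apply, Matrix.updateCol_apply, if_neg hj]
          rfl
      have hself : G t = (G t).updateCol m0 (fun i => X i m0) := by
        ext i j
        by_cases hj : j = m0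
        · subst hj; simp [hG, hm0, Matrix.updateCol_apply]
        · simp only [Matrix.updateCol_apply, if_neg hj]
      have hdet : (G (t + 1)).det = (E m0).det + (G t).det := by
        have hadd := Matrix.det_updateCol_add (G t) m0
          (fun i => Y i m0 - X i m0) (fun i => X i m0)
        rw [show ((fun i => Y i m0 - X i m0) + fun i => X i m0) = fun i => Y i m0 by
          funext i; simp] at hadd
        rw [hup1, hadd, ← hup2, ← hself]
      have hfil : Finset.univ.filter (fun m : Fin k => (m : ℕ) < t + 1)
          = insert m0 (Finset.univ.filter (fun m : Fin k => (m : ℕ) < t)) := by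
        ext m
        simp only [Finset.mem_filter, Finset.mem_univ, true_and, Finset.mem_insert,
          Nat.lt_succ_iff_lt_or_eq]
        constructor
        · rintro (h | h)
          · exact Or.inr (by simpa using h)
          · exact Or.inl (Fin.ext h)
        · rintro (h | h)
          · exact Or.inr (by simp [h, hm0])
          · exact Or.inl h
      rw [hfil, Finset.sum_insert (by simp [hm0]), ← ihh, hdet]
      ring
  have h1 := key k le_rfl
  have h2 : G k = Y := by ext i j; simp [hG, j.isLt]
  have h3 : G 0 = X := by ext i j; simp [hG]
  have h4 : Finset.univ.filter (fun m : Fin k => (m : ℕ) < k) = Finset.univ := by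
    ext m; simp [m.isLt]
  rw [h2, h3, h4] at h1
  exact h1

end Aux

/-- quantitative continuity of the Plücker map near a matrix with
unit columns. -/
theorem pluecker_close_of_columns_close (n k : ℕ) (hk : 1 ≤ k) (hkn : k ≤ n)
    (ε : ℝ) (hε0 : 0 < ε) (hε1 : ε < 1)
    (v w : Fin k → EuclideanSpace ℝ (Fin n))
    (hv : ∀ i, ‖v i‖ = 1)
    (hw : ∀ i, ‖w i - v i‖ ≤ (2 : ℝ) ^ (-(k : ℤ)) * ε)
    (A B : Matrix (Fin n) (Fin k) ℝ)
    (hA : ∀ i j, A i j = v j i) (hB : ∀ i j, B i j = w j i) :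
    ‖pluecker n k B - pluecker n k A‖ ≤ ε := by
  classical
  set x : ℝ := (2 : ℝ) ^ (-(k : ℤ)) with hxdef
  set δ : ℝ := x * ε with hδdef
  have hx0 : 0 < x := by positivity
  have hxval : x = ((2 : ℝ) ^ k)⁻¹ := by
    rw [hxdef, zpow_neg, zpow_natCast]
  have hδ0 : 0 ≤ δ := by positivity
  have hδx : δ ≤ x := by
    rw [hδdef]
    nlinarith
  -- `k ≤ 2 ^ k / 2` over the reals
  have hknat : k ≤ 2 ^ (k - 1) := by
    have h := Nat.lt_two_pow_self (n := k - 1)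
    have hk1 : k - 1 + 1 = k := by omega
    omega
  have hkx : (k : ℝ) * x ≤ 1 / 2 := by
    have h1 : (k : ℝ) ≤ 2 ^ (k - 1) := by
      exact_mod_cast Nat.cast_le.mpr hknat
    have h2 : (2 : ℝ) ^ (k - 1) * 2 = 2 ^ k := by
      rw [← pow_succ]
      congr 1
      omega
    have h3 : (0 : ℝ) < 2 ^ k := by positivity
    rw [hxval]
    rw [div_eq_mul_inv, one_mul, mul_inv_le_iff₀ h3]  -- maybe wrong lemma names
    nlinarith
  have hk1x : ((k - 1 : ℕ) : ℝ) * x ≤ 1 / 2 := by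
    have : ((k - 1 : ℕ) : ℝ) ≤ (k : ℝ) := by
      exact_mod_cast Nat.cast_le.mpr (Nat.sub_le k 1)
    nlinarith
  -- `(1 + δ) ^ (k - 1) ≤ 2`
  have hkR : (1 : ℝ) ≤ (k : ℝ) := by exact_mod_cast hk
  have hx1 : x ≤ 1 / 2 := le_trans (by nlinarith) hkx
  have hb : (1 + δ) ^ (k - 1) ≤ 2 := by
    have hstep : (1 + δ) ^ (k - 1) ≤ (1 + x) ^ (k - 1) := by
      apply pow_le_pow_left₀ (by linarith) (by linarith)
    have hber : 1 - ((k - 1 : ℕ) : ℝ) * x ≤ (1 - x) ^ (k - 1) := by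
      have h := one_add_mul_le_pow (a := -x) (by linarith) (k - 1)
      calc 1 - ((k - 1 : ℕ) : ℝ) * x = 1 + ((k - 1 : ℕ) : ℝ) * (-x) := by ring
      _ ≤ (1 + -x) ^ (k - 1) := h
      _ = (1 - x) ^ (k - 1) := by ring_nf
    have hmul : (1 + x) ^ (k - 1) * (1 - x) ^ (k - 1) ≤ 1 := by
      rw [← mul_pow]
      apply pow_le_one₀ (by nlinarith) (by nlinarith)
    have hhalf : (1 : ℝ) / 2 ≤ (1 - x) ^ (k - 1) := by linarith
    have hpos : (0 : ℝ) ≤ (1 + x) ^ (k - 1) := by positivity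
    nlinarith
  -- the interpolating matrices
  set D : Fin k → Matrix (Fin n) (Fin k) ℝ := fun m => Matrix.of fun (i : Fin n) (j : Fin k) =>
    if (j : ℕ) < (m : ℕ) then B i j else if j = m then B i j - A i j else A i j with hD
  have htel : pluecker n k B - pluecker n k A = ∑ m : Fin k, pluecker n k (D m) := by
    ext lam
    have hs : (∑ m : Fin k, pluecker n k (D m)) lam
        = ∑ m : Fin k, pluecker n k (D m) lam := by
      rw [WithLp.ofLp_sum, Finset.sum_apply]
    show pluecker n k B lam - pluecker n k A lam = _
    rw [hs]
    exact det_telescope (A.submatrix (lam.1.orderEmbOfFin lam.2) id)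
      (B.submatrix (lam.1.orderEmbOfFin lam.2) id)
  have hwnorm : ∀ j, ‖w j‖ ≤ 1 + δ := by
    intro j
    calc ‖w j‖ = ‖(w j - v j) + v j‖ := by rw [sub_add_cancel]
    _ ≤ ‖w j - v j‖ + ‖v j‖ := norm_add_le _ _
    _ ≤ δ + 1 := by
        rw [hv j]
        linarith [hw j]
    _ = 1 + δ := by ring
  have hbound : ∀ m : Fin k, ‖pluecker n k (D m)‖ ≤ δ * (1 + δ) ^ (k - 1) := by
    intro m
    set cm : Fin k → EuclideanSpace ℝ (Fin n) := fun j =>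
      if (j : ℕ) < (m : ℕ) then w j else if j = m then w j - v j else v j with hcm
    have hMc : ∀ i j, (D m) i j = cm j i := by
      intro i j
      rw [hD, hcm]
      simp only [Matrix.of_apply]
      by_cases h1 : (j : ℕ) < (m : ℕ)
      · simp [h1, hB]
      · by_cases h2 : j = m
        · subst h2
          simp [h1, hB, hA]
        · simp [h1, h2, hA]
    calc ‖pluecker n k (D m)‖ ≤ ∏ j, ‖cm j‖ := pluecker_norm_le cm (D m) hMc
    _ ≤ δ * (1 + δ) ^ (k - 1) := by
        rw [← Finset.mul_prod_erase Finset.univ _ (Finset.mem_univ m)]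
        have hcmm : ‖cm m‖ ≤ δ := by
          rw [hcm]
          simp only [lt_self_iff_false, if_false, if_pos rfl, if_true]
          exact hw m
        have hrest : ∏ j ∈ Finset.univ.erase m, ‖cm j‖ ≤ (1 + δ) ^ (k - 1) := by
          have hcard : (Finset.univ.erase m).card = k - 1 := by
            rw [Finset.card_erase_of_mem (Finset.mem_univ m), Finset.card_univ,
              Fintype.card_fin]
          rw [← hcard]
          calc ∏ j ∈ Finset.univ.erase m, ‖cm j‖
              ≤ ∏ _j ∈ Finset.univ.erase m, (1 + δ) := by
                apply Finset.prod_le_prod (fun _ _ => norm_nonneg _)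
                intro j hj
                have hne : j ≠ m := Finset.ne_of_mem_erase hj
                rw [hcm]
                by_cases h1 : (j : ℕ) < (m : ℕ)
                · simp only [if_pos h1]
                  exact hwnorm j
                · simp only [if_neg h1, if_neg hne]
                  rw [hv j]
                  linarith
          _ = (1 + δ) ^ (Finset.univ.erase m).card := Finset.prod_const _
        apply mul_le_mul hcmm hrest (Finset.prod_nonneg fun _ _ => norm_nonneg _) hδ0
  rw [htel]
  calc ‖∑ m : Fin k, pluecker n k (D m)‖ ≤ ∑ m : Fin k, ‖pluecker n k (D m)‖ :=
      norm_sum_le _ _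
  _ ≤ ∑ _m : Fin k, δ * (1 + δ) ^ (k - 1) := Finset.sum_le_sum fun m _ => hbound m
  _ = (k : ℝ) * (δ * (1 + δ) ^ (k - 1)) := by
      rw [Finset.sum_const, Finset.card_univ, Fintype.card_fin, nsmul_eq_mul]
  _ ≤ (k : ℝ) * (δ * 2) := by
      apply mul_le_mul_of_nonneg_left _ (Nat.cast_nonneg k)
      exact mul_le_mul_of_nonneg_left hb hδ0
  _ = ((k : ℝ) * x) * (2 * ε) := by rw [hδdef]; ring
  _ ≤ (1 / 2) * (2 * ε) := by
      apply mul_le_mul_of_nonneg_right hkx (by linarith)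
  _ = ε := by ring
end

section
/- Let N ≥ 2, let E = EuclideanSpace ℝ (Fin N), let e ∈ E with ‖e‖ = 1, let r > 1 and p > (1+r)²/r be real numbers. Define f : E → ℝ by f(0) = 0 and f(x) = ‖x‖ * ‖(‖x‖⁻¹ • x) − r • e‖^p for x ≠ 0 (the positively homogeneous degree-1 extension of the function x ↦ ‖x − r • e‖^p from the unit sphere). Then f is not convex on E. -/
open scoped BigOperators

open Real

lemma aux_ineq (r p : ℝ) (hr : 1 < r) (hp : (1 + r) ^ 2 / r < p) :
    ∃ s : ℝ, 1 < s ∧ s * (1 + 2*r/s + r^2) ^ (p/2) < (1 + r) ^ p := by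
  have hr0 : (0:ℝ) < r := by linarith
  have hr1 : (0:ℝ) < 1 + r := by linarith
  have hrsq : (0:ℝ) < (1+r)^2 := by positivity
  set A : ℝ := p * r / (1+r)^2 with hA_def
  have hp0 : 0 < p := lt_trans (by positivity) hp
  have hA : 1 < A := by
    rw [hA_def, lt_div_iff₀ hrsq]
    have := (div_lt_iff₀ hr0).mp hp
    nlinarith
  set c : ℝ := 2*r/(1+r)^2 with hc_def
  have hc0 : 0 < c := by positivity
  have hc1 : c < 1 := by
    rw [hc_def, div_lt_one hrsq]; nlinarith
  have hA0 : 0 < A := by linarith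
  set δ : ℝ := min (1/2) ((A-1)/(2*A)) with hδ_def
  have hδ0 : 0 < δ := lt_min (by norm_num) (div_pos (by linarith) (by linarith))
  have hδhalf : δ ≤ 1/2 := min_le_left _ _
  have hδA : δ ≤ (A-1)/(2*A) := min_le_right _ _
  have hδ1 : δ < 1 := by linarith
  set s : ℝ := (1-δ)⁻¹ with hs_def
  have h1δ : 0 < 1 - δ := by linarith
  have hs1 : 1 < s := by
    rw [hs_def, lt_inv_comm₀ (by norm_num) h1δ]; linarith
  have hs0 : 0 < s := by linarith
  refine ⟨s, hs1, ?_⟩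
  have hsinv : s⁻¹ = 1 - δ := by rw [hs_def, inv_inv]
  have hcδ : 0 < 1 - c*δ := by nlinarith
  -- rewrite the base
  have hbase : 1 + 2*r/s + r^2 = (1+r)^2 * (1 - c*δ) := by
    have : 2*r/s = 2*r*(1-δ) := by
      rw [div_eq_mul_inv, hsinv]
    rw [this, hc_def]
    field_simp
    ring
  rw [hbase]
  have hpow : ((1+r)^2 * (1 - c*δ)) ^ (p/2) = (1+r)^p * (1-c*δ)^(p/2) := by
    rw [Real.mul_rpow (le_of_lt hrsq) (le_of_lt hcδ)]
    congr 1
    rw [← Real.rpow_natCast (1+r) 2, ← Real.rpow_mul (le_of_lt hr1)]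
    rw [show (2:ℕ)*(p/2) = p by push_cast; ring]
  rw [hpow]
  have key : (1 - c*δ)^(p/2) < 1 - δ := by
    have h1 : (1 - c*δ)^(p/2) ≤ Real.exp (-(A*δ)) := by
      rw [Real.rpow_def_of_pos hcδ]
      apply Real.exp_le_exp.mpr
      have hlog : Real.log (1 - c*δ) ≤ -(c*δ) := by
        have := Real.log_le_sub_one_of_pos hcδ
        linarith
      have : Real.log (1 - c*δ) * (p/2) ≤ -(c*δ) * (p/2) := by
        apply mul_le_mul_of_nonneg_right hlog (by linarith)
      calc Real.log (1 - c*δ) * (p/2) ≤ -(c*δ) * (p/2) := this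
        _ = -(A*δ) := by rw [hA_def, hc_def]; field_simp
    have h2 : Real.exp (-(A*δ)) ≤ (1 + A*δ)⁻¹ := by
      rw [Real.exp_neg]
      apply inv_anti₀ (by positivity)
      exact Real.add_one_le_exp (A*δ) |>.trans_eq' (by ring)
    have h3 : (1 + A*δ)⁻¹ < 1 - δ := by
      rw [inv_lt_iff_one_lt_mul₀' (by positivity)]
      have hδA' : A*δ < A - 1 := by
        have : δ < (A-1)/A := lt_of_le_of_lt hδA (by
          rw [div_lt_div_iff₀ (by linarith) hA0]; nlinarith)
        have := (lt_div_iff₀ hA0).mp this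
        linarith
      nlinarith [mul_lt_mul_of_pos_right hδA' hδ0]
    linarith
  have hrp : 0 < (1+r:ℝ)^p := Real.rpow_pos_of_pos hr1 p
  calc s * ((1+r)^p * (1-c*δ)^(p/2)) = (1+r)^p * (s * (1-c*δ)^(p/2)) := by ring
    _ < (1+r)^p * 1 := by
        apply mul_lt_mul_of_pos_left _ hrp
        rw [hs_def]
        calc (1-δ)⁻¹ * (1-c*δ)^(p/2) < (1-δ)⁻¹ * (1-δ) := by
              apply mul_lt_mul_of_pos_left key (by positivity)
          _ = 1 := inv_mul_cancel₀ (ne_of_gt h1δ)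
    _ = (1+r)^p := mul_one _

/-- the positively homogeneous degree-1 extension of the restriction
to the unit sphere of the convex function x ↦ ‖x − r • e‖^p need not be convex. -/
theorem homogeneous_extension_not_convex (N : ℕ) (hN : 2 ≤ N)
    (e : EuclideanSpace ℝ (Fin N)) (he : ‖e‖ = 1)
    (r p : ℝ) (hr : 1 < r) (hp : (1 + r) ^ 2 / r < p)
    (f : EuclideanSpace ℝ (Fin N) → ℝ)
    (hf0 : f 0 = 0)
    (hf : ∀ x : EuclideanSpace ℝ (Fin N), x ≠ 0 →
      f x = ‖x‖ * ‖(‖x‖⁻¹ • x) - r • e‖ ^ p) :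
    ¬ ConvexOn ℝ Set.univ f := by
  intro hcv
  have hr1 : (0:ℝ) < 1 + r := by linarith
  have he0 : e ≠ 0 := by intro h; rw [h, norm_zero] at he; exact absurd he (by norm_num)
  -- find a unit vector orthogonal to e
  obtain ⟨v, hv1, hov⟩ : ∃ v : EuclideanSpace ℝ (Fin N), ‖v‖ = 1 ∧ inner ℝ e v = 0 := by
    have hfr : Module.finrank ℝ (EuclideanSpace ℝ (Fin N)) = N := by
      simp [finrank_euclideanSpace]
    have hsum := (ℝ ∙ e).finrank_add_finrank_orthogonal
    rw [hfr, finrank_span_singleton he0] at hsum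
    have hpos : 0 < Module.finrank ℝ ((ℝ ∙ e)ᗮ : Submodule ℝ (EuclideanSpace ℝ (Fin N))) := by
      omega
    have : Nontrivial ((ℝ ∙ e)ᗮ : Submodule ℝ (EuclideanSpace ℝ (Fin N))) :=
      Module.finrank_pos_iff.mp hpos
    obtain ⟨⟨w, hw⟩, hwne⟩ := exists_ne (0 : ((ℝ ∙ e)ᗮ : Submodule ℝ (EuclideanSpace ℝ (Fin N))))
    have hw0 : w ≠ 0 := fun h => hwne (Subtype.ext h)
    refine ⟨‖w‖⁻¹ • w, ?_, ?_⟩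
    · rw [norm_smul]; simp [norm_ne_zero_iff.mpr hw0]
    · have h6 : inner ℝ e w = 0 := by
        have h7 := (Submodule.mem_orthogonal _ w).mp hw e (Submodule.mem_span_singleton_self e)
        first
        | exact h7
        | (rw [real_inner_comm]; exact h7)
      rw [real_inner_smul_right, h6, mul_zero]
  have hve : inner ℝ v e = 0 := by rw [real_inner_comm]; exact hov
  -- norm of linear combinations
  have hnorm : ∀ α β : ℝ, ‖α • v + β • e‖^2 = α^2 + β^2 := by
    intro α β
    rw [norm_add_sq_real, real_inner_smul_left, real_inner_smul_right, hve]
    simp [norm_smul, he, hv1, mul_pow, sq_abs]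
  obtain ⟨s, hs1, hkey⟩ := aux_ineq r p hr hp
  have hs0 : (0:ℝ) < s := by linarith
  set t : ℝ := Real.sqrt (s^2 - 1) with ht_def
  have ht2 : t^2 = s^2 - 1 := Real.sq_sqrt (by nlinarith)
  have ht0 : 0 < t := Real.sqrt_pos.mpr (by nlinarith)
  set a : EuclideanSpace ℝ (Fin N) := t • v + (-1 : ℝ) • e with ha_def
  set b : EuclideanSpace ℝ (Fin N) := (-t) • v + (-1 : ℝ) • e with hb_def
  -- norms of a and b
  have hna : ‖a‖ = s := by
    have h2 : ‖a‖^2 = s^2 := by rw [ha_def, hnorm]; nlinarith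
    calc ‖a‖ = Real.sqrt (‖a‖^2) := (Real.sqrt_sq (norm_nonneg a)).symm
      _ = Real.sqrt (s^2) := by rw [h2]
      _ = s := Real.sqrt_sq hs0.le
  have hnb : ‖b‖ = s := by
    have h2 : ‖b‖^2 = s^2 := by rw [hb_def, hnorm]; nlinarith
    calc ‖b‖ = Real.sqrt (‖b‖^2) := (Real.sqrt_sq (norm_nonneg b)).symm
      _ = Real.sqrt (s^2) := by rw [h2]
      _ = s := Real.sqrt_sq hs0.le
  have ha0 : a ≠ 0 := by
    intro h; rw [h, norm_zero] at hna; linarith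
  have hb0 : b ≠ 0 := by
    intro h; rw [h, norm_zero] at hnb; linarith
  -- common value of the squared norm on the sphere
  have hval : (1:ℝ) + 2*r/s + r^2 = (t/s)^2 + (s⁻¹ + r)^2 := by
    have hsne : s ≠ 0 := ne_of_gt hs0
    have h8 : (t/s)^2 = (s^2-1)/s^2 := by rw [div_pow, ht2]
    rw [h8]
    field_simp
    ring
  have hX0 : (0:ℝ) ≤ 1 + 2*r/s + r^2 := by positivity
  -- compute f a
  have hfa : f a = s * (1 + 2*r/s + r^2) ^ (p/2) := by
    rw [hf a ha0, hna]
    congr 1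
    have hw : s⁻¹ • a - r • e = (t/s) • v + (-(s⁻¹ + r)) • e := by
      rw [ha_def]; match_scalars <;> (field_simp; try ring)
    rw [hw]
    have h2 : ‖(t/s) • v + (-(s⁻¹ + r)) • e‖^2 = 1 + 2*r/s + r^2 := by
      rw [hnorm, hval]; ring
    rw [show ‖(t/s) • v + (-(s⁻¹ + r)) • e‖ = ((1:ℝ) + 2*r/s + r^2) ^ ((1:ℝ)/2) by
      rw [← h2, ← Real.rpow_natCast ‖(t/s) • v + (-(s⁻¹ + r)) • e‖ 2, ← Real.rpow_mul (norm_nonneg _)]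
      norm_num]
    rw [← Real.rpow_mul hX0]
    congr 1; ring
  have hfb : f b = s * (1 + 2*r/s + r^2) ^ (p/2) := by
    rw [hf b hb0, hnb]
    congr 1
    have hw : s⁻¹ • b - r • e = (-(t/s)) • v + (-(s⁻¹ + r)) • e := by
      rw [hb_def]; match_scalars <;> (field_simp; try ring)
    rw [hw]
    have h2 : ‖(-(t/s)) • v + (-(s⁻¹ + r)) • e‖^2 = 1 + 2*r/s + r^2 := by
      rw [hnorm, hval]; ring
    rw [show ‖(-(t/s)) • v + (-(s⁻¹ + r)) • e‖ = ((1:ℝ) + 2*r/s + r^2) ^ ((1:ℝ)/2) by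
      rw [← h2, ← Real.rpow_natCast ‖(-(t/s)) • v + (-(s⁻¹ + r)) • e‖ 2, ← Real.rpow_mul (norm_nonneg _)]
      norm_num]
    rw [← Real.rpow_mul hX0]
    congr 1; ring
  -- compute f (-e)
  have hfe : f (-e) = (1 + r) ^ p := by
    rw [hf (-e) (neg_ne_zero.mpr he0), norm_neg, he]
    have h1 : (1:ℝ)⁻¹ • (-e) - r • e = (-(1+r)) • e := by module
    rw [h1, norm_smul, he, mul_one, Real.norm_eq_abs, abs_neg, abs_of_pos hr1, one_mul]
  -- convexity at the midpoint
  have hmid : (1/2 : ℝ) • a + (1/2 : ℝ) • b = -e := by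
    rw [ha_def, hb_def]; module
  have := hcv.2 (Set.mem_univ a) (Set.mem_univ b)
    (by norm_num : (0:ℝ) ≤ 1/2) (by norm_num : (0:ℝ) ≤ 1/2) (by norm_num)
  rw [hmid, hfe, hfa, hfb] at this
  simp only [smul_eq_mul] at this
  linarith
end
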